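/- Let α > 0 and suppose Z is a stationary (KKT) point. For i ∈ {1,…,N} define Δ₁^{(i)} = Σ_{j∈T₁(i)} (r⁴ − (z_iᵀz_j)²), Δ₂^{(i)} = Σ_{j∈T₂(i)} ((r² − 1/(4α))² − (z_iᵀz_j − 1/(4α))²), and, for k ≠ y(i), Δ^{(i,k)} = Σ_{j∈D(k)} (r⁴ − (z_iᵀz_j)²). Then for every i ∈ {1,…,N}: Δ₁^{(i)} + Δ₂^{(i)} + Σ_{k∈{1,…,K}∖{y(i)}} Δ^{(i,k)} ≥ (1 − 1/d)·N·r⁴. -/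

import Mathlib

open Finset
open scoped BigOperators RealInnerProductSpace

/-- The set of indices whose label is `k`. -/
def classSet {N K : ℕ} (y : Fin N → Fin K) (k : Fin K) : Finset (Fin N) :=
  Finset.univ.filter (fun j => y j = k)

/-- `T₂(i)`: the indices `j` with `ŵ i j = 1`. -/
def T2 {N : ℕ} (w : Fin N → Fin N → Bool) (i : Fin N) : Finset (Fin N) :=
  Finset.univ.filter (fun j => w i j = true)

/-- `T₁(i)`: the indices `j` in the class of `i` with `ŵ i j = 0`. -/
def T1 {N K : ℕ} (y : Fin N → Fin K) (w : Fin N → Fin N → Bool) (i : Fin N) :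
    Finset (Fin N) :=
  Finset.univ.filter (fun j => y j = y i ∧ w i j = false)

/-- `ŵ` as a real-valued (0/1) matrix entry. -/
def wR {N : ℕ} (w : Fin N → Fin N → Bool) (i j : Fin N) : ℝ := if w i j then 1 else 0

/-- The `d × N` matrix whose columns are the representations `z i`. -/
def Zmat {N d : ℕ} (z : Fin N → EuclideanSpace ℝ (Fin d)) : Matrix (Fin d) (Fin N) ℝ :=
  Matrix.of fun a i => z i a

/-- The graph Laplacian of the adjacency `a i j = ŵ i j + μ i j`. -/
noncomputable def Lmat {N : ℕ} (w : Fin N → Fin N → Bool) (μ : Fin N → Fin N → ℝ) :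
    Matrix (Fin N) (Fin N) ℝ :=
  Matrix.of fun i j =>
    if i = j then ∑ k ∈ Finset.univ.erase i, (wR w i k + μ i k) else -(wR w i j + μ i j)

/-- The feature correlation matrix `C = (1/N) ∑ i, z i (z i)ᵀ`. -/
noncomputable def Cmat {N d : ℕ} (z : Fin N → EuclideanSpace ℝ (Fin d)) :
    Matrix (Fin d) (Fin d) ℝ :=
  ((N : ℝ))⁻¹ • ∑ i, Matrix.of (fun a b => z i a * z i b)

/-- Stationarity (KKT) equation `Z L + 2 α N (C − (r²/d) I_d) Z = 0`
for the multipliers `μ`. -/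
def IsKKT {N d : ℕ} (z : Fin N → EuclideanSpace ℝ (Fin d)) (w : Fin N → Fin N → Bool)
    (μ : Fin N → Fin N → ℝ) (α r : ℝ) : Prop :=
  Zmat z * Lmat w μ + (2 * α * (N : ℝ)) •
    ((Cmat z - (r ^ 2 / (d : ℝ)) • (1 : Matrix (Fin d) (Fin d) ℝ)) * Zmat z) = 0

theorem stmt_2
    (N d K : ℕ) (hN : 1 ≤ N) (hd : 1 ≤ d) (hK : 1 ≤ K)
    (r : ℝ) (hr : 0 < r)
    (z : Fin N → EuclideanSpace ℝ (Fin d)) (hz : ∀ i, ‖z i‖ = r)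
    (y : Fin N → Fin K)
    (hD : ∀ k, (classSet y k).Nonempty)
    (w : Fin N → Fin N → Bool)
    (hsym : ∀ i j, w i j = w j i)
    (hdiag : ∀ i, w i i = true)
    (hcls : ∀ i j, w i j = true → y i = y j)
    (α : ℝ) (hα : 0 < α)
    (hstat : ∃ μ : Fin N → Fin N → ℝ,
      (∀ i j, μ i j = μ j i) ∧ (∀ i, μ i i = 0) ∧
      (∀ i j, i ≠ j → 0 ≤ μ i j) ∧ IsKKT z w μ α r) :
    ∀ i : Fin N,
      (∑ j ∈ T1 y w i, (r ^ 4 - ⟪z i, z j⟫ ^ 2)) +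
        (∑ j ∈ T2 w i,
          ((r ^ 2 - 1 / (4 * α)) ^ 2 - (⟪z i, z j⟫ - 1 / (4 * α)) ^ 2)) +
        (∑ k ∈ Finset.univ.erase (y i), ∑ j ∈ classSet y k, (r ^ 4 - ⟪z i, z j⟫ ^ 2))
      ≥ (1 - 1 / (d : ℝ)) * (N : ℝ) * r ^ 4 := by

  obtain ⟨μ, hμsym, hμdiag, hμpos, hkkt⟩ := hstat
  intro i
  have hN0 : (N : ℝ) ≠ 0 := Nat.cast_ne_zero.mpr (by omega)
  have hd0 : (d : ℝ) ≠ 0 := Nat.cast_ne_zero.mpr (by omega)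
  have hα' : α ≠ 0 := ne_of_gt hα
  set s : Fin N → ℝ := fun j => ∑ a, z i a * z j a with hs
  have hinner : ∀ j, ⟪z i, z j⟫ = s j := by
    intro j
    simp [hs, PiLp.inner_apply, RCLike.inner_apply]
    exact Finset.sum_congr rfl fun _ _ => mul_comm _ _
  have hsi : s i = r ^ 2 := by
    rw [← hinner i, real_inner_self_eq_norm_sq, hz]
  have hsle : ∀ j, s j ≤ r ^ 2 := by
    intro j
    rw [← hinner j]
    calc ⟪z i, z j⟫ ≤ ‖z i‖ * ‖z j‖ := real_inner_le_norm _ _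
      _ = r ^ 2 := by rw [hz, hz]; ring
  have hwRsym : ∀ a b, wR w a b = wR w b a := by
    intro a b; unfold wR; rw [hsym]
  -- scalar KKT identity
  have h1 : ∑ a, z i a * ((Zmat z * Lmat w μ) a i)
      = ∑ j ∈ Finset.univ.erase i, (wR w i j + μ i j) * (r ^ 2 - s j) := by
    have e1 : ∀ a, z i a * ((Zmat z * Lmat w μ) a i)
        = ∑ j, (Lmat w μ j i) * (z i a * z j a) := by
      intro a
      rw [Matrix.mul_apply, Finset.mul_sum]
      refine Finset.sum_congr rfl fun j _ => ?_
      simp only [Zmat, Matrix.of_apply]; ring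
    calc ∑ a, z i a * ((Zmat z * Lmat w μ) a i)
        = ∑ a, ∑ j, (Lmat w μ j i) * (z i a * z j a) :=
          Finset.sum_congr rfl fun a _ => e1 a
      _ = ∑ j, (Lmat w μ j i) * s j := by
          rw [Finset.sum_comm]
          exact Finset.sum_congr rfl fun j _ => (Finset.mul_sum _ _ _).symm
      _ = (Lmat w μ i i) * s i + ∑ j ∈ Finset.univ.erase i, (Lmat w μ j i) * s j :=
          (Finset.add_sum_erase _ _ (Finset.mem_univ i)).symm
      _ = (∑ j ∈ Finset.univ.erase i, (wR w i j + μ i j)) * r ^ 2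
            + ∑ j ∈ Finset.univ.erase i, (-(wR w i j + μ i j)) * s j := by
          rw [hsi]
          congr 1
          · simp [Lmat]
          · refine Finset.sum_congr rfl fun j hj => ?_
            have hji : j ≠ i := Finset.ne_of_mem_erase hj
            simp only [Lmat, Matrix.of_apply, if_neg hji]
            rw [hwRsym j i, hμsym j i]
      _ = ∑ j ∈ Finset.univ.erase i, (wR w i j + μ i j) * (r ^ 2 - s j) := by
          rw [Finset.sum_mul, ← Finset.sum_add_distrib]
          exact Finset.sum_congr rfl fun j _ => by ring
  have h2 : ∑ a, z i a * (((Cmat z - (r ^ 2 / (d : ℝ)) • (1 : Matrix (Fin d) (Fin d) ℝ))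
        * Zmat z) a i)
      = (N : ℝ)⁻¹ * (∑ j, (s j) ^ 2) - (r ^ 2 / (d : ℝ)) * r ^ 2 := by
    have hMZ : ((Cmat z - (r ^ 2 / (d : ℝ)) • (1 : Matrix (Fin d) (Fin d) ℝ)) * Zmat z)
        = Cmat z * Zmat z - (r ^ 2 / (d : ℝ)) • Zmat z := by
      rw [Matrix.sub_mul, Matrix.smul_mul, Matrix.one_mul]
    rw [hMZ]
    have hsplit : ∀ a, z i a * ((Cmat z * Zmat z - (r ^ 2 / (d : ℝ)) • Zmat z) a i)
        = z i a * ((Cmat z * Zmat z) a i) - (r ^ 2 / (d : ℝ)) * (z i a * z i a) := by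
      intro a
      simp only [Matrix.sub_apply, Matrix.smul_apply, smul_eq_mul, Zmat, Matrix.of_apply]
      ring
    rw [Finset.sum_congr rfl fun a _ => hsplit a, Finset.sum_sub_distrib, ← Finset.mul_sum]
    have hsi' : ∑ a, z i a * z i a = r ^ 2 := hsi
    rw [hsi']
    congr 1
    -- main quadratic term
    have hC : ∀ a b, (Cmat z) a b = (N : ℝ)⁻¹ * ∑ j, z j a * z j b := by
      intro a b
      simp [Cmat, Matrix.sum_apply]
    calc ∑ a, z i a * ((Cmat z * Zmat z) a i)
        = ∑ a, ∑ b, ∑ j, (N : ℝ)⁻¹ * ((z i a * z j a) * (z i b * z j b)) := by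
          refine Finset.sum_congr rfl fun a _ => ?_
          rw [Matrix.mul_apply, Finset.mul_sum]
          refine Finset.sum_congr rfl fun b _ => ?_
          rw [hC a b, Finset.mul_sum, Finset.sum_mul, Finset.mul_sum]
          refine Finset.sum_congr rfl fun j _ => ?_
          simp only [Zmat, Matrix.of_apply]; ring
      _ = ∑ j, ∑ a, ∑ b, (N : ℝ)⁻¹ * ((z i a * z j a) * (z i b * z j b)) :=
          Eq.trans (Finset.sum_congr rfl fun a _ => Finset.sum_comm)
            Finset.sum_comm
      _ = (N : ℝ)⁻¹ * ∑ j, (s j) ^ 2 := by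
          rw [Finset.mul_sum]
          refine Finset.sum_congr rfl fun j _ => ?_
          have : (s j) ^ 2 = (∑ a, z i a * z j a) * (∑ b, z i b * z j b) := by
            rw [hs]; ring
          rw [this, Finset.sum_mul_sum, Finset.mul_sum]
          refine Finset.sum_congr rfl fun a _ => ?_
          rw [Finset.mul_sum]
  have hscalar : (∑ j ∈ Finset.univ.erase i, (wR w i j + μ i j) * (r ^ 2 - s j))
      + 2 * α * (N : ℝ) * ((N : ℝ)⁻¹ * (∑ j, (s j) ^ 2) - (r ^ 2 / (d : ℝ)) * r ^ 2)
      = 0 := by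
    unfold IsKKT at hkkt
    have h0 : ∀ a, (Zmat z * Lmat w μ) a i
        + (2 * α * (N : ℝ)) * (((Cmat z - (r ^ 2 / (d : ℝ)) • (1 : Matrix (Fin d) (Fin d) ℝ))
          * Zmat z) a i) = 0 := by
      intro a
      have := congrFun (congrFun hkkt a) i
      simpa [Matrix.add_apply, Matrix.smul_apply, smul_eq_mul] using this
    have hzero : ∑ a, (z i a * ((Zmat z * Lmat w μ) a i)
        + (2 * α * (N : ℝ)) * (z i a * (((Cmat z - (r ^ 2 / (d : ℝ)) • (1 : Matrix (Fin d) (Fin d) ℝ))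
          * Zmat z) a i))) = 0 := by
      refine Finset.sum_eq_zero fun a _ => ?_
      have h := h0 a
      linear_combination z i a * h
    rw [Finset.sum_add_distrib, ← Finset.mul_sum, h1, h2] at hzero
    exact hzero
  -- abbreviations
  set A : ℝ := ∑ j ∈ Finset.univ.erase i, (wR w i j + μ i j) * (r ^ 2 - s j) with hA
  set B : ℝ := ∑ j ∈ T2 w i, (r ^ 2 - s j) with hB
  set S : ℝ := ∑ j, (s j) ^ 2 with hS
  -- B ≤ A
  have hBA : B ≤ A := by
    have hiT2 : i ∈ T2 w i := by simp [T2, hdiag]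
    have e1 : B = ∑ j ∈ (T2 w i).erase i, (r ^ 2 - s j) := by
      rw [hB, ← Finset.sum_erase_add _ _ hiT2, hsi]; ring
    have hset : (Finset.univ.erase i).filter (fun j => w i j = true) = (T2 w i).erase i := by
      ext j
      simp only [T2, Finset.mem_erase, Finset.mem_filter, Finset.mem_univ, true_and]
      tauto
    have e2 : ∑ j ∈ (T2 w i).erase i, (r ^ 2 - s j)
        = ∑ j ∈ Finset.univ.erase i, wR w i j * (r ^ 2 - s j) := by
      rw [← hset, Finset.sum_filter]
      refine Finset.sum_congr rfl fun j _ => ?_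
      unfold wR
      by_cases hwij : w i j = true <;> simp [hwij]
    rw [e1, e2, hA]
    refine Finset.sum_le_sum fun j hj => ?_
    have hji : j ≠ i := Finset.ne_of_mem_erase hj
    have hμ0 : 0 ≤ μ i j := hμpos i j (Ne.symm hji)
    have hts : 0 ≤ r ^ 2 - s j := by linarith [hsle j]
    nlinarith
  -- rewrite the goal
  simp only [hinner]
  have hΔ2 : ∑ j ∈ T2 w i, ((r ^ 2 - 1 / (4 * α)) ^ 2 - (s j - 1 / (4 * α)) ^ 2)
      = (∑ j ∈ T2 w i, (r ^ 4 - (s j) ^ 2)) - (2 * α)⁻¹ * B := by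
    rw [hB, Finset.mul_sum, ← Finset.sum_sub_distrib]
    refine Finset.sum_congr rfl fun j _ => ?_
    field_simp
    ring
  rw [hΔ2]
  have hT2eq : (classSet y (y i)).filter (fun j => w i j = true) = T2 w i := by
    ext j
    simp only [classSet, T2, Finset.mem_filter, Finset.mem_univ, true_and]
    exact ⟨fun h => h.2, fun h => ⟨(hcls i j h).symm, h⟩⟩
  have hT1eq : (classSet y (y i)).filter (fun j => ¬ w i j = true) = T1 y w i := by
    ext j
    simp only [classSet, T1, Finset.mem_filter, Finset.mem_univ, true_and,
      Bool.not_eq_true]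
  have hcl : ∑ j ∈ classSet y (y i), (r ^ 4 - (s j) ^ 2)
      = (∑ j ∈ T1 y w i, (r ^ 4 - (s j) ^ 2)) + ∑ j ∈ T2 w i, (r ^ 4 - (s j) ^ 2) := by
    rw [← Finset.sum_filter_add_sum_filter_not (classSet y (y i)) (fun j => w i j = true),
      hT1eq, hT2eq, add_comm]
  have hfiber : ∑ k : Fin K, ∑ j ∈ classSet y k, (r ^ 4 - (s j) ^ 2)
      = ∑ j, (r ^ 4 - (s j) ^ 2) :=
    Finset.sum_fiberwise_of_maps_to (fun x _ => Finset.mem_univ (y x)) _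
  have hclasses : ∑ k : Fin K, ∑ j ∈ classSet y k, (r ^ 4 - (s j) ^ 2)
      = (∑ j ∈ classSet y (y i), (r ^ 4 - (s j) ^ 2))
        + ∑ k ∈ Finset.univ.erase (y i), ∑ j ∈ classSet y k, (r ^ 4 - (s j) ^ 2) :=
    (Finset.add_sum_erase _ _ (Finset.mem_univ (y i))).symm
  have huniv : ∑ j, (r ^ 4 - (s j) ^ 2) = (N : ℝ) * r ^ 4 - S := by
    rw [hS, Finset.sum_sub_distrib, Finset.sum_const, Finset.card_univ, Fintype.card_fin,
      nsmul_eq_mul]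
  have hsum_eq : (∑ j ∈ T1 y w i, (r ^ 4 - (s j) ^ 2))
      + (∑ j ∈ T2 w i, (r ^ 4 - (s j) ^ 2))
      + ∑ k ∈ Finset.univ.erase (y i), ∑ j ∈ classSet y k, (r ^ 4 - (s j) ^ 2)
      = (N : ℝ) * r ^ 4 - S := by
    rw [← hcl, ← hclasses, hfiber, huniv]
  -- final arithmetic
  have hA_eq : A = 2 * α * ((N : ℝ) * r ^ 4 / (d : ℝ) - S) := by
    have e : 2 * α * (N : ℝ) * ((N : ℝ)⁻¹ * S - (r ^ 2 / (d : ℝ)) * r ^ 2)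
        = 2 * α * S - 2 * α * ((N : ℝ) * r ^ 4 / (d : ℝ)) := by
      field_simp
    rw [e] at hscalar
    linarith
  have hinvB : (2 * α)⁻¹ * B ≤ (N : ℝ) * r ^ 4 / (d : ℝ) - S := by
    have h2α : (0 : ℝ) < 2 * α := by linarith
    have := mul_le_mul_of_nonneg_left hBA (le_of_lt (inv_pos.mpr h2α))
    calc (2 * α)⁻¹ * B ≤ (2 * α)⁻¹ * A := this
      _ = (N : ℝ) * r ^ 4 / (d : ℝ) - S := by
        rw [hA_eq, ← mul_assoc, inv_mul_cancel₀ (ne_of_gt h2α), one_mul]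
  have hgoal_eq : (1 - 1 / (d : ℝ)) * (N : ℝ) * r ^ 4
      = (N : ℝ) * r ^ 4 - (N : ℝ) * r ^ 4 / (d : ℝ) := by ring
  rw [ge_iff_le, hgoal_eq]
  linarith [hsum_eq, hinvB]
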